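/- arXiv:1303.6977 — 3 statements merged into one kernel-verified Lean document; each statement's English description precedes it below -/
import Mathlib

section
/- If the statistic is sufficient, then the ABC acceptance rule with threshold ε = 0 samples exactly from the true posterior. Precisely: let M be a finite set of models with prior pmf β : M → ℝ (β m ≥ 0, ∑_m β m = 1), H a finite set of histories, and P : M → H → ℝ a likelihood with P m z ≥ 0 and ∑_{z∈H} P m z = 1 for each m. Fix an observed history h ∈ H with marginal φ(h) = ∑_m β m · P m h > 0, and a statistic f : H → W into any type W. Let A_0 = {z ∈ H : f z = f h} and P m (A_0) = ∑_{z∈A_0} P m z. Suppose f is sufficient, i.e. for all m ∈ M and all z, x ∈ H, f z = f x implies P m z = P m x. Then for every m ∈ M, β m · P m (A_0) / (∑_{m'} β m' · P m' (A_0)) = β m · P m h / φ(h); that is, the ABC posterior with ε = 0 equals the true posterior. -/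
/-- If the statistic `f` is sufficient, then the ABC posterior with threshold
`ε = 0` (acceptance set `A₀ = {z | f z = f h}`) equals the true posterior. -/
theorem abc_sufficient_statistic_exact_posterior
    {M H W : Type*} [Fintype M] [Fintype H] [DecidableEq W]
    (β : M → ℝ) (P : M → H → ℝ) (h : H) (f : H → W)
    (hβ : ∀ m, 0 ≤ β m) (hβsum : ∑ m, β m = 1)
    (hP : ∀ m z, 0 ≤ P m z) (hPsum : ∀ m, ∑ z, P m z = 1)
    (hφ : 0 < ∑ m, β m * P m h)
    (hsuff : ∀ m z x, f z = f x → P m z = P m x) :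
    ∀ m : M,
      β m * (∑ z ∈ Finset.univ.filter (fun z => f z = f h), P m z) /
          (∑ m', β m' * ∑ z ∈ Finset.univ.filter (fun z => f z = f h), P m' z)
        = β m * P m h / (∑ m', β m' * P m' h) := by
  intro m
  set A := Finset.univ.filter (fun z => f z = f h) with hA
  have hsum : ∀ m', ∑ z ∈ A, P m' z = (A.card : ℝ) * P m' h := by
    intro m'
    rw [Finset.sum_congr rfl (fun z hz => hsuff m' z h (Finset.mem_filter.mp hz).2)]
    simp [Finset.sum_const, nsmul_eq_mul, hA]
  have hcard : (0 : ℝ) < A.card := by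
    have : h ∈ A := Finset.mem_filter.mpr ⟨Finset.mem_univ h, rfl⟩
    exact_mod_cast Finset.card_pos.mpr ⟨h, this⟩
  simp only [hsum]
  have hdenom : ∑ m', β m' * ((A.card : ℝ) * P m' h) = (A.card : ℝ) * ∑ m', β m' * P m' h := by
    rw [Finset.mul_sum]; congr 1; ext m'; ring
  rw [hdenom]
  field_simp
end

section
/- KL bound for the ABC posterior (main theorem): let M be a finite set of models with prior pmf β : M → ℝ (β m ≥ 0, ∑_m β m = 1), H a finite set of histories, and P : M → H → ℝ a likelihood with P m z > 0 for all m, z and ∑_{z∈H} P m z = 1 for each m. Fix an observed history h ∈ H, a real normed space W, a statistic f : H → W, a threshold ε ≥ 0, and set A_ε = {z ∈ H : ‖f z − f h‖ ≤ ε} and P m (A_ε) = ∑_{z∈A_ε} P m z; let φ(h) = ∑_m β m · P m h and φ(A_ε) = ∑_m β m · P m (A_ε), and assume φ(h) > 0. Define the true posterior β(m|h) = β m · P m h / φ(h) and the ABC posterior β_ε(m|h) = β m · P m (A_ε) / φ(A_ε). Assume the likelihood is L-Lipschitz in the statistic for some L > 0: for all m ∈ M and z, x ∈ H, |ln(P m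 z / P m x)| ≤ L · ‖f z − f x‖. Then the KL divergence satisfies D(β(·|h) ‖ β_ε(·|h)) = ∑_{m : β m > 0} β(m|h) · ln(β(m|h)/β_ε(m|h)) ≤ ln |A_ε| + 2 L ε, where |A_ε| is the cardinality of A_ε. -/
open scoped Classical

/-- KL bound for the ABC posterior: under the Lipschitz (smoothness) assumption
on the likelihood with constant `L > 0`, the KL divergence between the true
posterior `β(·|h)` and the ABC posterior `β_ε(·|h)` is at most
`ln |A_ε| + 2 L ε`. -/
theorem abc_posterior_kl_bound
    {M H W : Type*} [Fintype M] [Fintype H]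
    [NormedAddCommGroup W] [NormedSpace ℝ W]
    (β : M → ℝ) (P : M → H → ℝ) (h : H) (f : H → W) (ε L : ℝ)
    (hβ : ∀ m, 0 ≤ β m) (hβsum : ∑ m, β m = 1)
    (hP : ∀ m z, 0 < P m z) (hPsum : ∀ m, ∑ z, P m z = 1)
    (hε : 0 ≤ ε) (hL : 0 < L)
    (hφ : 0 < ∑ m, β m * P m h)
    (hLip : ∀ m z x, |Real.log (P m z / P m x)| ≤ L * ‖f z - f x‖) :
    (∑ m ∈ Finset.univ.filter (fun m : M => 0 < β m),
        (β m * P m h / (∑ m', β m' * P m' h)) *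
          Real.log ((β m * P m h / (∑ m', β m' * P m' h)) /
            (β m * (∑ z ∈ Finset.univ.filter (fun z : H => ‖f z - f h‖ ≤ ε), P m z) /
              (∑ m', β m' *
                ∑ z ∈ Finset.univ.filter (fun z : H => ‖f z - f h‖ ≤ ε), P m' z))))
      ≤ Real.log ((Finset.univ.filter (fun z : H => ‖f z - f h‖ ≤ ε)).card : ℝ)
          + 2 * L * ε := by
  set A := Finset.univ.filter (fun z : H => ‖f z - f h‖ ≤ ε) with hA
  have hhA : h ∈ A := by simp [hA, hε]
  set φh := ∑ m', β m' * P m' h with hφh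
  set PA : M → ℝ := fun m => ∑ z ∈ A, P m z with hPA
  have hPApos : ∀ m, 0 < PA m := fun m => Finset.sum_pos (fun z _ => hP m z) ⟨h, hhA⟩
  have hPAgeh : ∀ m, P m h ≤ PA m :=
    fun m => Finset.single_le_sum (fun z _ => (hP m z).le) hhA
  have hcard : 0 < (A.card : ℝ) := by exact_mod_cast Finset.card_pos.mpr ⟨h, hhA⟩
  have hLε : 0 ≤ L * ε := mul_nonneg hL.le hε
  -- pointwise bound on P m z for z ∈ A
  have hPz : ∀ m, ∀ z ∈ A, P m z ≤ Real.exp (L * ε) * P m h := by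
    intro m z hz
    have hzA : ‖f z - f h‖ ≤ ε := by simpa [hA] using hz
    have hlip := (le_abs_self _).trans (hLip m z h)
    have hlog : Real.log (P m z / P m h) ≤ L * ε :=
      hlip.trans (by nlinarith)
    have hpos : 0 < P m z / P m h := div_pos (hP m z) (hP m h)
    have hle := (Real.log_le_iff_le_exp hpos).mp hlog
    have hPmh := hP m h
    calc P m z = (P m z / P m h) * P m h := by field_simp
      _ ≤ Real.exp (L * ε) * P m h := by nlinarith
  have hPAle : ∀ m, PA m ≤ (A.card : ℝ) * Real.exp (L * ε) * P m h := by
    intro m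
    calc PA m ≤ ∑ _z ∈ A, Real.exp (L * ε) * P m h := Finset.sum_le_sum (hPz m)
      _ = (A.card : ℝ) * Real.exp (L * ε) * P m h := by
          rw [Finset.sum_const, nsmul_eq_mul]; ring
  set φA := ∑ m', β m' * PA m' with hφA
  have hφAge : φh ≤ φA :=
    Finset.sum_le_sum (fun m _ => mul_le_mul_of_nonneg_left (hPAgeh m) (hβ m))
  have hφApos : 0 < φA := lt_of_lt_of_le hφ hφAge
  have hφAle : φA ≤ (A.card : ℝ) * Real.exp (L * ε) * φh := by
    calc φA ≤ ∑ m', β m' * ((A.card : ℝ) * Real.exp (L * ε) * P m' h) :=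
          Finset.sum_le_sum (fun m _ => mul_le_mul_of_nonneg_left (hPAle m) (hβ m))
      _ = (A.card : ℝ) * Real.exp (L * ε) * φh := by
          rw [Finset.mul_sum]; exact Finset.sum_congr rfl (fun m _ => by ring)
  -- per-term bound on the log
  have hlogbound : ∀ m ∈ Finset.univ.filter (fun m : M => 0 < β m),
      Real.log ((β m * P m h / φh) / (β m * PA m / φA))
        ≤ Real.log (A.card : ℝ) + 2 * L * ε := by
    intro m hm
    have hβm : 0 < β m := (Finset.mem_filter.mp hm).2
    have harg : (β m * P m h / φh) / (β m * PA m / φA)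
        = (P m h / PA m) * (φA / φh) := by
      field_simp [hβm.ne', hφ.ne', (hPApos m).ne', hφApos.ne']
    have h1 : P m h / PA m ≤ 1 := (div_le_one (hPApos m)).mpr (hPAgeh m)
    have h2 : φA / φh ≤ (A.card : ℝ) * Real.exp (L * ε) :=
      (div_le_iff₀ hφ).mpr hφAle
    have hargpos : 0 < (P m h / PA m) * (φA / φh) :=
      mul_pos (div_pos (hP m h) (hPApos m)) (div_pos hφApos hφ)
    have hargle : (P m h / PA m) * (φA / φh) ≤ (A.card : ℝ) * Real.exp (L * ε) := by
      have h3 : 0 < φA / φh := div_pos hφApos hφ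
      nlinarith
    have hlogle := Real.log_le_log hargpos hargle
    rw [harg]
    calc Real.log ((P m h / PA m) * (φA / φh))
        ≤ Real.log ((A.card : ℝ) * Real.exp (L * ε)) := hlogle
      _ = Real.log (A.card : ℝ) + L * ε := by
          rw [Real.log_mul hcard.ne' (Real.exp_ne_zero _), Real.log_exp]
      _ ≤ Real.log (A.card : ℝ) + 2 * L * ε := by nlinarith
  -- weights sum to 1 over the filter
  have hwsum : ∑ m ∈ Finset.univ.filter (fun m : M => 0 < β m),
      β m * P m h / φh = 1 := by
    have : ∑ m ∈ Finset.univ.filter (fun m : M => 0 < β m), β m * P m h = φh := by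
      rw [hφh]
      refine Finset.sum_subset (Finset.filter_subset _ _) ?_
      intro m _ hm
      have : β m = 0 := by
        by_contra hne
        exact hm (Finset.mem_filter.mpr ⟨Finset.mem_univ m, lt_of_le_of_ne (hβ m) (Ne.symm hne)⟩)
      simp [this]
    rw [← Finset.sum_div, this, div_self (ne_of_gt hφ)]
  calc (∑ m ∈ Finset.univ.filter (fun m : M => 0 < β m),
        (β m * P m h / φh) *
          Real.log ((β m * P m h / φh) / (β m * PA m / φA)))
      ≤ ∑ m ∈ Finset.univ.filter (fun m : M => 0 < β m),
        (β m * P m h / φh) * (Real.log (A.card : ℝ) + 2 * L * ε) := by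
        refine Finset.sum_le_sum (fun m hm => ?_)
        have hβm : 0 < β m := (Finset.mem_filter.mp hm).2
        have hw : 0 ≤ β m * P m h / φh :=
          div_nonneg (mul_nonneg (hβ m) (hP m h).le) hφ.le
        exact mul_le_mul_of_nonneg_left (hlogbound m hm) hw
    _ = Real.log (A.card : ℝ) + 2 * L * ε := by
        rw [← Finset.sum_mul, hwsum, one_mul]
end

section
/- Pointwise posterior density-ratio bound implied by the proof of the ABC theorem: let M be a finite set of models with prior pmf β, H a finite history set, P : M → H → ℝ a likelihood with P m z > 0 for all m, z, observed history h ∈ H with φ(h) = ∑_m β m · P m h > 0, f : H → W a statistic into a real normed space, ε ≥ 0, A_ε = {z ∈ H : ‖f z − f h‖ ≤ ε}, P m (A_ε) = ∑_{z∈A_ε} P m z, φ(A_ε) = ∑_m β m · P m (A_ε); define β(m|h) = β m · P m h / φ(h) and β_ε(m|h) = β m · P m (A_ε) / φ(A_ε). If the Lipschitz assumption holds with constant L > 0 (for all m and z, x ∈ H, |ln(P m z / P m x)| ≤ L ‖f z − f x‖), then for every m ∈ M with β m > 0, β(m|h) / β_ε(m|h) ≤ |A_ε| · e^{2Lε}.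 -/
open scoped Classical

/-- Pointwise posterior density-ratio bound: under the Lipschitz assumption,
for every model `m` with positive prior mass,
`β(m|h) / β_ε(m|h) ≤ |A_ε| · e^{2Lε}`. -/
theorem abc_posterior_ratio_bound
    {M H W : Type*} [Fintype M] [Fintype H]
    [NormedAddCommGroup W] [NormedSpace ℝ W]
    (β : M → ℝ) (P : M → H → ℝ) (h : H) (f : H → W) (ε L : ℝ)
    (hβ : ∀ m, 0 ≤ β m) (hβsum : ∑ m, β m = 1)
    (hP : ∀ m z, 0 < P m z)
    (hε : 0 ≤ ε) (hL : 0 < L)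
    (hφ : 0 < ∑ m, β m * P m h)
    (hLip : ∀ m z x, |Real.log (P m z / P m x)| ≤ L * ‖f z - f x‖) :
    ∀ m : M, 0 < β m →
      (β m * P m h / (∑ m', β m' * P m' h)) /
          (β m * (∑ z ∈ Finset.univ.filter (fun z : H => ‖f z - f h‖ ≤ ε), P m z) /
            (∑ m', β m' *
              ∑ z ∈ Finset.univ.filter (fun z : H => ‖f z - f h‖ ≤ ε), P m' z))
        ≤ ((Finset.univ.filter (fun z : H => ‖f z - f h‖ ≤ ε)).card : ℝ) *
            Real.exp (2 * L * ε) := by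
  intro m hm
  set A := Finset.univ.filter (fun z : H => ‖f z - f h‖ ≤ ε) with hA
  have hhA : h ∈ A := by simp [hA, hε]
  have hAne : A.Nonempty := ⟨h, hhA⟩
  set c : ℝ := (A.card : ℝ) with hcdef
  have hc1 : (1 : ℝ) ≤ c := by rw [hcdef]; exact_mod_cast Finset.card_pos.mpr hAne
  have hS : ∀ m', 0 < ∑ z ∈ A, P m' z := fun m' =>
    Finset.sum_pos (fun z _ => hP m' z) hAne
  have hφA : 0 < ∑ m', β m' * ∑ z ∈ A, P m' z :=
    Finset.sum_pos' (fun m' _ => mul_nonneg (hβ m') (hS m').le)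
      ⟨m, Finset.mem_univ m, mul_pos hm (hS m)⟩
  have hpt : ∀ m' (z : H), z ∈ A → P m' z ≤ Real.exp (L * ε) * P m' h := by
    intro m' z hz
    have hzε : ‖f z - f h‖ ≤ ε := by simpa [hA] using hz
    have h1 : Real.log (P m' z / P m' h) ≤ L * ε := by
      calc Real.log (P m' z / P m' h) ≤ |Real.log (P m' z / P m' h)| := le_abs_self _
        _ ≤ L * ‖f z - f h‖ := hLip m' z h
        _ ≤ L * ε := by nlinarith [norm_nonneg (f z - f h)]
    have h2 : P m' z / P m' h ≤ Real.exp (L * ε) := by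
      have := Real.exp_le_exp.mpr h1
      rwa [Real.exp_log (div_pos (hP m' z) (hP m' h))] at this
    calc P m' z = (P m' z / P m' h) * P m' h := (div_mul_cancel₀ _ (hP m' h).ne').symm
      _ ≤ Real.exp (L * ε) * P m' h :=
          mul_le_mul_of_nonneg_right h2 (hP m' h).le
  have hSle : ∀ m', (∑ z ∈ A, P m' z) ≤ c * Real.exp (L * ε) * P m' h := by
    intro m'
    calc ∑ z ∈ A, P m' z ≤ ∑ _z ∈ A, Real.exp (L * ε) * P m' h :=
        Finset.sum_le_sum (fun z hz => hpt m' z hz)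
      _ = c * Real.exp (L * ε) * P m' h := by
        rw [Finset.sum_const, nsmul_eq_mul]; ring
  have hφAle : (∑ m', β m' * ∑ z ∈ A, P m' z)
      ≤ c * Real.exp (L * ε) * (∑ m', β m' * P m' h) := by
    rw [Finset.mul_sum]
    refine Finset.sum_le_sum fun m' _ => ?_
    calc β m' * ∑ z ∈ A, P m' z ≤ β m' * (c * Real.exp (L * ε) * P m' h) :=
        mul_le_mul_of_nonneg_left (hSle m') (hβ m')
      _ = c * Real.exp (L * ε) * (β m' * P m' h) := by ring
  have hPle : P m h ≤ ∑ z ∈ A, P m z :=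
    Finset.single_le_sum (fun z _ => (hP m z).le) hhA
  have hexp : Real.exp (L * ε) ≤ Real.exp (2 * L * ε) := by
    apply Real.exp_le_exp.mpr; nlinarith
  have key : P m h * (∑ m', β m' * ∑ z ∈ A, P m' z)
      ≤ c * Real.exp (2 * L * ε) * ((∑ z ∈ A, P m z) * (∑ m', β m' * P m' h)) := by
    calc P m h * (∑ m', β m' * ∑ z ∈ A, P m' z)
        ≤ (∑ z ∈ A, P m z) * (c * Real.exp (L * ε) * (∑ m', β m' * P m' h)) :=
          mul_le_mul hPle hφAle (by positivity) (hS m).le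
      _ ≤ c * Real.exp (2 * L * ε) * ((∑ z ∈ A, P m z) * (∑ m', β m' * P m' h)) := by
          nlinarith [mul_pos (hS m) hφ, mul_pos (mul_pos (hS m) hφ) (lt_of_lt_of_le one_pos hc1)]
  have heq : (β m * P m h / (∑ m', β m' * P m' h)) /
      (β m * (∑ z ∈ A, P m z) / (∑ m', β m' * ∑ z ∈ A, P m' z))
      = (P m h * (∑ m', β m' * ∑ z ∈ A, P m' z)) /
        ((∑ z ∈ A, P m z) * (∑ m', β m' * P m' h)) := by
    rw [div_div_div_eq, div_eq_div_iff (mul_pos hφ (mul_pos hm (hS m))).ne' (mul_pos (hS m) hφ).ne']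
    ring
  rw [heq, div_le_iff₀ (mul_pos (hS m) hφ)]
  linarith [key]
end
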